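/- Every finite Kripke frame (W, R, R_D) validating T_□ (□p→p), 4_□ (□p→□□p), D_□ ([∀]p→□p), B_D (p→[≠]⟨≠⟩p), 4_D ([∀]p→[≠][≠]p), and AT0, that is additionally a cone (R_D ∪ Id = W×W), gives rise via the Alexandroff topology on upward-closed sets to a topological space with selected points whose set of selected (R_D-irreflexive) points meets each R-cluster in at most one point. -/
import Mathlib


inductive Formula : Type where
  | var : Nat → Formula
  | bot : Formula
  | imp : Formula → Formula → Formula
  | box : Formula → Formula
  | dbox : Formula → Formula

def Formula.neg (φ : Formula) : Formula := .imp φ .bot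
def Formula.and (φ ψ : Formula) : Formula := .neg (.imp φ (.neg ψ))
def Formula.or (φ ψ : Formula) : Formula := .imp (.neg φ) ψ
def Formula.ddiam (φ : Formula) : Formula := .neg (.dbox (.neg φ))

/-- AT0 := (p ∧ [≠]¬p ∧ ⟨≠⟩(q ∧ [≠]¬q)) → (□¬q ∨ ⟨≠⟩(q ∧ □¬p)), with p = var 0, q = var 1. -/
def AT0 : Formula :=
  .imp (.and (.and (.var 0) (.dbox (.neg (.var 0))))
             (.ddiam (.and (.var 1) (.dbox (.neg (.var 1))))))
       (.or (.box (.neg (.var 1))) (.ddiam (.and (.var 1) (.box (.neg (.var 0))))))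

/-- Kripke semantics for the bimodal language: `□` via `R`, `[≠]` via `RD`. -/
def ksat {W : Type*} (R RD : W → W → Prop) (V : Nat → Set W) : W → Formula → Prop
  | x, .var p => x ∈ V p
  | _, .bot => False
  | x, .imp φ ψ => ksat R RD V x φ → ksat R RD V x ψ
  | x, .box φ => ∀ y, R x y → ksat R RD V y φ
  | x, .dbox φ => ∀ y, RD x y → ksat R RD V y φ

def Tsq : Formula := .imp (.box (.var 0)) (.var 0)
def Foursq : Formula := .imp (.box (.var 0)) (.box (.box (.var 0)))
def Dsq : Formula := .imp (.and (.dbox (.var 0)) (.var 0)) (.box (.var 0))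
def BD : Formula := .imp (.var 0) (.dbox (.ddiam (.var 0)))
def FourD : Formula := .imp (.and (.dbox (.var 0)) (.var 0)) (.dbox (.dbox (.var 0)))

/-- A finite cone frame validating T_□, 4_□, D_□, B_D, 4_D and AT0 gives rise,
via the Alexandroff topology of upward-closed sets, to a topological space with
selected points `{v | ¬ RD v v}` meeting each `R`-cluster in at most one
point. -/
theorem stmt19 {W : Type*} [Finite W] (R RD : W → W → Prop)
    (hT : ∀ (V : Nat → Set W) (x : W), ksat R RD V x Tsq)
    (h4 : ∀ (V : Nat → Set W) (x : W), ksat R RD V x Foursq)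
    (hD : ∀ (V : Nat → Set W) (x : W), ksat R RD V x Dsq)
    (hB : ∀ (V : Nat → Set W) (x : W), ksat R RD V x BD)
    (h4D : ∀ (V : Nat → Set W) (x : W), ksat R RD V x FourD)
    (hAT0 : ∀ (V : Nat → Set W) (x : W), ksat R RD V x AT0)
    (hcone : ∀ x y : W, RD x y ∨ x = y) :
    ∃ T : TopologicalSpace W,
      (∀ U : Set W, T.IsOpen U ↔ ∀ x ∈ U, ∀ y, R x y → y ∈ U) ∧
      ∀ x : W, ({v | ¬ RD v v} ∩ {y | R x y ∧ R y x}).Subsingleton := by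

  classical
  -- R is transitive
  have htrans : ∀ u v w : W, R u v → R v w → R u w := by
    intro u v w huv hvw
    have := h4 (fun _ => {z | R u z}) u
    simp only [Foursq, ksat] at this
    exact this (fun y hy => hy) v huv w hvw
  refine ⟨⟨fun U => ∀ x ∈ U, ∀ y, R x y → y ∈ U, ?_, ?_, ?_⟩, fun U => Iff.rfl, ?_⟩
  · intro x _ y _; trivial
  · intro s t hs ht x hx y hxy
    exact ⟨hs x hx.1 y hxy, ht x hx.2 y hxy⟩
  · intro S hS x hx y hxy
    obtain ⟨U, hU, hxU⟩ := hx
    exact ⟨U, hU, hS U hU x hxU y hxy⟩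
  · intro x a ⟨ha, hxa, hax⟩ b ⟨hb, hxb, hbx⟩
    by_contra hne
    have hab : R a b := htrans a x b hax hxb
    have hba : R b a := htrans b x a hbx hxa
    have hRDab : RD a b := (hcone a b).resolve_right hne
    have := hAT0 (fun n => if n = 0 then {a} else {b}) a
    simp only [AT0, Formula.and, Formula.or, Formula.neg, Formula.ddiam, ksat] at this
    -- massage the statement
    apply this
    · intro h
      apply h
      · exact fun h2 => (h2 (by simp) (fun y hy hya => by
          simp at hya; subst hya; exact ha hy))
      · intro h3
        apply h3 b hRDab
        intro h4'
        apply h4'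
        · simp
        · intro z hz hzb
          simp at hzb; subst hzb; exact hb hz
    · intro hbox
      have := hbox b hab
      simp at this
    · intro y hy h
      apply h
      intro hyb hboxnp
      simp at hyb; subst hyb
      exact hboxnp a hba (by simp)
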